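/- Let L be an orthomodular lattice, let r ∈ L, and let p, q ≤ r. If p and q are perspective in the interval sublattice L[0,r] (i.e., have a common complement x in L[0,r]), then p and q are perspective in L (i.e., have a common complement in L). -/
import Mathlib


universe u

/-- An orthomodular lattice: a bounded lattice with an orthocomplementation
satisfying the orthomodular law. -/
class OrthomodularLattice (L : Type u) extends Lattice L, BoundedOrder L where
  compl : L → L
  compl_compl : ∀ p : L, compl (compl p) = p
  compl_antitone : ∀ p q : L, p ≤ q → compl q ≤ compl p
  sup_compl : ∀ p : L, p ⊔ compl p = ⊤
  inf_compl : ∀ p : L, p ⊓ compl p = ⊥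
  orthomodular : ∀ p q : L, p ≤ q → q = p ⊔ (q ⊓ compl p)

namespace OrthomodularLattice

variable {L : Type u} [OrthomodularLattice L]

/-- `p` and `q` are perspective in the interval `L[0,r]`: they have a common
complement `x` in the bounded lattice `{y : L // y ≤ r}`. -/
def PerspectiveIn (r p q : L) : Prop :=
  ∃ x : L, x ≤ r ∧ p ⊔ x = r ∧ q ⊔ x = r ∧ p ⊓ x = ⊥ ∧ q ⊓ x = ⊥

/-- `p` and `q` are perspective in `L`: they have a common complement. -/
def Perspective (p q : L) : Prop :=
  ∃ x : L, p ⊔ x = ⊤ ∧ q ⊔ x = ⊤ ∧ p ⊓ x = ⊥ ∧ q ⊓ x = ⊥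

/-- `p` and `q` are strongly perspective: perspective in `L[0, p ⊔ q]`. -/
def StronglyPerspective (p q : L) : Prop :=
  PerspectiveIn (p ⊔ q) p q

end OrthomodularLattice

namespace OrthomodularLattice

variable {L : Type u} [OrthomodularLattice L]

lemma key (r x : L) (hx : x ≤ r) : (x ⊔ compl r) ⊓ r = x := by
  set w := (x ⊔ compl r) ⊓ r with hw
  have hxw : x ≤ w := le_inf le_sup_left hx
  have hom := orthomodular x w hxw
  have hwx : w ⊓ compl x = ⊥ := by
    have h1 : r ⊓ compl x ≤ compl (x ⊔ compl r) := by
      have hxle : x ≤ compl (r ⊓ compl x) := by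
        have := compl_antitone _ _ (inf_le_right : r ⊓ compl x ≤ compl x)
        rwa [compl_compl] at this
      have hrle : compl r ≤ compl (r ⊓ compl x) :=
        compl_antitone _ _ inf_le_left
      have := compl_antitone _ _ (sup_le hxle hrle)
      rwa [compl_compl] at this
    have : w ⊓ compl x ≤ (x ⊔ compl r) ⊓ compl (x ⊔ compl r) := by
      refine le_inf (le_trans inf_le_left inf_le_left) ?_
      refine le_trans ?_ h1
      exact le_inf (le_trans inf_le_left inf_le_right) inf_le_right
    rw [inf_compl] at this
    exact le_bot_iff.mp this
  rw [hwx, sup_bot_eq] at hom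
  exact hom

end OrthomodularLattice

open OrthomodularLattice in
theorem perspective_in_interval_implies_perspective
    {L : Type u} [OrthomodularLattice L] (r p q : L)
    (hp : p ≤ r) (hq : q ≤ r) (h : PerspectiveIn r p q) :
    Perspective p q := by
  obtain ⟨x, hxr, hpx, hqx, hpix, hqix⟩ := h
  refine ⟨x ⊔ compl r, ?_, ?_, ?_, ?_⟩
  · rw [← sup_assoc, hpx, sup_compl]
  · rw [← sup_assoc, hqx, sup_compl]
  · have : p ⊓ (x ⊔ compl r) = p ⊓ ((x ⊔ compl r) ⊓ r) := by
      rw [inf_comm (x ⊔ compl r) r, ← inf_assoc, inf_eq_left.mpr hp]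
    rw [this, key r x hxr, hpix]
  · have : q ⊓ (x ⊔ compl r) = q ⊓ ((x ⊔ compl r) ⊓ r) := by
      rw [inf_comm (x ⊔ compl r) r, ← inf_assoc, inf_eq_left.mpr hq]
    rw [this, key r x hxr, hqix]
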